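/- arXiv:2412.06057 — 4 statements merged into one kernel-verified Lean document; each statement's English description precedes it below -/
import Mathlib

section
/- The pair x(t) = 1/√(2c₁c₂ + c₁t²), y(t) = −c₁t/(2c₁c₂ + c₁t²)^{3/2} solves the first-order Buchdahl system x' = y, y' = (3/x)·y² + (1/t)·y for all t > 0 where 2c₁c₂ + c₁t² > 0. -/
theorem buchdahl_system_solution (c₁ c₂ : ℝ) (hc₁ : c₁ ≠ 0)
    (x y : ℝ → ℝ)
    (hx : ∀ t, x t = (2 * c₁ * c₂ + c₁ * t ^ 2) ^ (-(1 : ℝ) / 2))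
    (hy : ∀ t, y t = -c₁ * t * (2 * c₁ * c₂ + c₁ * t ^ 2) ^ (-(3 : ℝ) / 2)) :
    ∀ t : ℝ, 0 < t → 0 < 2 * c₁ * c₂ + c₁ * t ^ 2 →
      HasDerivAt x (y t) t ∧
      HasDerivAt y ((3 / x t) * (y t) ^ 2 + (1 / t) * y t) t := by
  intro t ht hu
  have hxf : x = fun s => (2 * c₁ * c₂ + c₁ * s ^ 2) ^ (-(1 : ℝ) / 2) := funext hx
  have hyf : y = fun s => -c₁ * s * (2 * c₁ * c₂ + c₁ * s ^ 2) ^ (-(3 : ℝ) / 2) := funext hy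
  have hu' : HasDerivAt (fun s : ℝ => 2 * c₁ * c₂ + c₁ * s ^ 2) (2 * c₁ * t) t := by
    have := ((hasDerivAt_pow 2 t).const_mul c₁).const_add (2 * c₁ * c₂)
    convert this using 1
    case e'_4 => rfl
    case e'_5 => rfl
    push_cast
    ring
  have hune : (2 * c₁ * c₂ + c₁ * t ^ 2) ≠ 0 := ne_of_gt hu
  have hdx : HasDerivAt x (y t) t := by
    rw [hxf, hy]
    have := hu'.rpow_const (p := -(1 : ℝ)/2) (Or.inl hune)
    convert this using 1
    have h32 : -(1:ℝ)/2 - 1 = -(3:ℝ)/2 := by norm_num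
    rw [h32]
    ring
  refine ⟨hdx, ?_⟩
  have h1 : HasDerivAt (fun s : ℝ => -c₁ * s) (-c₁) t := by
    simpa using (hasDerivAt_id t).const_mul (-c₁)
  have h2 : HasDerivAt (fun s : ℝ => (2 * c₁ * c₂ + c₁ * s ^ 2) ^ (-(3 : ℝ) / 2))
      ((-(3:ℝ)/2) * (2 * c₁ * c₂ + c₁ * t ^ 2) ^ (-(5:ℝ)/2) * (2 * c₁ * t)) t := by
    have := hu'.rpow_const (p := -(3 : ℝ)/2) (Or.inl hune)
    convert this using 1
    have h52 : -(3:ℝ)/2 - 1 = -(5:ℝ)/2 := by norm_num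
    rw [h52]
    ring
  have hdy := h1.mul h2
  rw [hyf]
  convert hdy using 1
  case e'_4 => rfl
  case e'_5 => rfl
  case e'_8 => rfl
  beta_reduce
  rw [hx]
  have htne : t ≠ 0 := ne_of_gt ht
  have hAinv : ((2 * c₁ * c₂ + c₁ * t ^ 2 : ℝ) ^ (-(1:ℝ)/2))⁻¹
      = (2 * c₁ * c₂ + c₁ * t ^ 2) ^ ((1:ℝ)/2) := by
    rw [← Real.rpow_neg hu.le]
    norm_num
  have hE : (2 * c₁ * c₂ + c₁ * t ^ 2 : ℝ) ^ ((1:ℝ)/2)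
        * ((2 * c₁ * c₂ + c₁ * t ^ 2) ^ (-(3:ℝ)/2) * (2 * c₁ * c₂ + c₁ * t ^ 2) ^ (-(3:ℝ)/2))
      = (2 * c₁ * c₂ + c₁ * t ^ 2) ^ (-(5:ℝ)/2) := by
    rw [← Real.rpow_add hu, ← Real.rpow_add hu]
    norm_num
  rw [div_eq_mul_inv, hAinv]
  rw [← hE]
  field_simp
  ring
end

section
/- The functions q(t) = −(1/z)·ln(1 − z c₁ e^{γ(t)}) and p(t) = (e^{−γ(t)} − z c₁)·(c₂ + ∫_{t₀}^t (e^{−γ(τ)} − z c₁)^{−1} dτ) solve the deformed book system q' = b(t)·(e^{zq}−1)/z, p' = 1 − b(t)·e^{zq}·p, on any interval where 1 − z c₁ e^{γ(t)} > 0, with γ' = b. -/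
theorem deformed_book_system_solution (z : ℝ) (hz : z ≠ 0) (c₁ c₂ : ℝ)
    (b γ : ℝ → ℝ) (hb : Continuous b) (hγ : ∀ t, HasDerivAt γ (b t) t)
    (I : Set ℝ) (hI : IsOpen I) (hconv : Convex ℝ I) (t₀ : ℝ) (ht₀ : t₀ ∈ I)
    (hpos : ∀ t ∈ I, 0 < 1 - z * c₁ * Real.exp (γ t))
    (q p : ℝ → ℝ)
    (hq : ∀ t, q t = -Real.log (1 - z * c₁ * Real.exp (γ t)) / z)
    (hp : ∀ t, p t = (Real.exp (-γ t) - z * c₁) *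
        (c₂ + ∫ τ in t₀..t, (Real.exp (-γ τ) - z * c₁)⁻¹)) :
    ∀ t ∈ I,
      HasDerivAt q (b t * (Real.exp (z * q t) - 1) / z) t ∧
      HasDerivAt p (1 - b t * Real.exp (z * q t) * p t) t := by
  have hγcont : Continuous γ := by
    have : Differentiable ℝ γ := fun s => (hγ s).differentiableAt
    exact this.continuous
  -- w is positive on I
  have hw_pos : ∀ s ∈ I, 0 < Real.exp (-γ s) - z * c₁ := by
    intro s hs
    have h := hpos s hs
    have he : (0:ℝ) < Real.exp (γ s) := Real.exp_pos _
    have : Real.exp (-γ s) - z * c₁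
        = Real.exp (-γ s) * (1 - z * c₁ * Real.exp (γ s)) := by
      rw [Real.exp_neg]
      field_simp
    rw [this]
    positivity
  have hwcont : Continuous (fun s => Real.exp (-γ s) - z * c₁) := by
    continuity
  intro t ht
  have hut : (0:ℝ) < 1 - z * c₁ * Real.exp (γ t) := hpos t ht
  have hut' : (1 - z * c₁ * Real.exp (γ t)) ≠ 0 := ne_of_gt hut
  -- derivative of u
  have hu : HasDerivAt (fun s => 1 - z * c₁ * Real.exp (γ s))
      (-(z * c₁ * (Real.exp (γ t) * b t))) t := by
    have := ((hγ t).exp.const_mul (z * c₁)).const_sub 1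
    simpa using this
  -- exp(z * q t) = (u t)⁻¹
  have hexpq : Real.exp (z * q t) = (1 - z * c₁ * Real.exp (γ t))⁻¹ := by
    rw [hq t]
    have : z * (-Real.log (1 - z * c₁ * Real.exp (γ t)) / z)
        = -Real.log (1 - z * c₁ * Real.exp (γ t)) := by field_simp
    rw [this, Real.exp_neg, Real.exp_log hut]
  constructor
  · -- q part
    have hqfun : q = fun s => -Real.log (1 - z * c₁ * Real.exp (γ s)) / z :=
      funext hq
    have hder : HasDerivAt q
        (-((-(z * c₁ * (Real.exp (γ t) * b t))) / (1 - z * c₁ * Real.exp (γ t))) / z) t := by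
      rw [hqfun]
      exact ((hu.log hut').neg).div_const z
    convert hder using 1
    rw [hexpq]
    field_simp
    ring
  · -- p part
    set w : ℝ → ℝ := fun s => Real.exp (-γ s) - z * c₁ with hw_def
    have hwt : (0:ℝ) < w t := hw_pos t ht
    have hwt' : w t ≠ 0 := ne_of_gt hwt
    have hcontOn : ContinuousOn (fun s => (w s)⁻¹) I := by
      intro s hs
      exact ((hwcont.continuousAt).inv₀ (ne_of_gt (hw_pos s hs))).continuousWithinAt
    have hsub : Set.uIcc t₀ t ⊆ I := by
      have : I.OrdConnected := hconv.ordConnected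
      exact this.uIcc_subset ht₀ ht
    have hF : HasDerivAt (fun s => ∫ τ in t₀..s, (w τ)⁻¹) ((w t)⁻¹) t := by
      apply intervalIntegral.integral_hasDerivAt_right
      · exact (hcontOn.mono hsub).intervalIntegrable
      · exact hcontOn.stronglyMeasurableAtFilter hI t ht
      · exact (hcontOn t ht).continuousAt (hI.mem_nhds ht)
    have hw' : HasDerivAt w (-(b t * Real.exp (-γ t))) t := by
      have := (((hγ t).neg).exp).sub_const (z * c₁)
      simpa [hw_def, mul_comm] using this
    have hpfun : p = fun s => w s * (c₂ + ∫ τ in t₀..s, (w τ)⁻¹) := funext hp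
    have hder : HasDerivAt p
        ((-(b t * Real.exp (-γ t))) * (c₂ + ∫ τ in t₀..t, (w τ)⁻¹)
          + w t * ((0:ℝ) + (w t)⁻¹)) t := by
      rw [hpfun]
      exact hw'.mul ((hasDerivAt_const t c₂).add hF)
    convert hder using 1
    have hwe : Real.exp (-γ t) - z * c₁
        = Real.exp (-γ t) * (1 - z * c₁ * Real.exp (γ t)) := by
      rw [Real.exp_neg]
      field_simp
    simp only [hw_def]
    rw [hp t, hexpq]
    rw [hwe]
    have hE : Real.exp (-γ t) * Real.exp (γ t) = 1 := by rw [← Real.exp_add]; simp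
    have hE0 : Real.exp (-γ t) ≠ 0 := (Real.exp_pos _).ne'
    field_simp
    linear_combination (exp := 1) (0:ℝ) * hE
end

section
/- Let F(t) = c₁ + ∫_{t₀}^t e^{−γ(τ)} b₂(τ) dτ with γ' = b₁. The functions q(t) = −(1/z)·ln(1 − z e^{γ(t)} F(t)) and p(t) = (e^{−γ(t)} − z F(t))·(c₂ + ∫_{t₀}^t (e^{−γ(τ)} − z F(τ))^{−1} dτ) solve the deformed oscillator system q' = b₁(t)·(e^{zq}−1)/z + b₂(t)·e^{zq}, p' = 1 − b₁(t)·e^{zq}·p − z·b₂(t)·e^{zq}·p, on intervals where 1 − z e^{γ(t)} F(t) > 0. -/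
theorem deformed_oscillator_system_solution (z : ℝ) (hz : z ≠ 0) (c₁ c₂ : ℝ)
    (b₁ b₂ γ : ℝ → ℝ) (hb₁ : Continuous b₁) (hb₂ : Continuous b₂)
    (hγ : ∀ t, HasDerivAt γ (b₁ t) t)
    (I : Set ℝ) (hI : IsOpen I) (hconv : Convex ℝ I) (t₀ : ℝ) (ht₀ : t₀ ∈ I)
    (F : ℝ → ℝ) (hF : ∀ t, F t = c₁ + ∫ τ in t₀..t, Real.exp (-γ τ) * b₂ τ)
    (hpos : ∀ t ∈ I, 0 < 1 - z * Real.exp (γ t) * F t)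
    (q p : ℝ → ℝ)
    (hq : ∀ t, q t = -Real.log (1 - z * Real.exp (γ t) * F t) / z)
    (hp : ∀ t, p t = (Real.exp (-γ t) - z * F t) *
        (c₂ + ∫ τ in t₀..t, (Real.exp (-γ τ) - z * F τ)⁻¹)) :
    ∀ t ∈ I,
      HasDerivAt q (b₁ t * (Real.exp (z * q t) - 1) / z + b₂ t * Real.exp (z * q t)) t ∧
      HasDerivAt p (1 - b₁ t * Real.exp (z * q t) * p t
        - z * b₂ t * Real.exp (z * q t) * p t) t := by
  have hγc : Continuous γ := continuous_iff_continuousAt.mpr fun s => (hγ s).continuousAt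
  -- derivative of F
  have hFd : ∀ s, HasDerivAt F (Real.exp (-γ s) * b₂ s) s := by
    intro s
    have hcont : Continuous fun τ => Real.exp (-γ τ) * b₂ τ := ((hγc.neg).rexp.mul hb₂)
    have h1 := (hcont.integral_hasStrictDerivAt t₀ s).hasDerivAt.const_add c₁
    exact h1.congr_of_eventuallyEq (Filter.Eventually.of_forall fun u => hF u)
  have hFc : Continuous F := by
    have : ∀ s, HasDerivAt F (Real.exp (-γ s) * b₂ s) s := hFd
    exact continuous_iff_continuousAt.mpr fun s => (this s).continuousAt
  -- G
  set G : ℝ → ℝ := fun s => 1 - z * Real.exp (γ s) * F s with hGdef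
  have hGd : ∀ s, HasDerivAt G
      (-(z * (Real.exp (γ s) * b₁ s) * F s + z * Real.exp (γ s) * (Real.exp (-γ s) * b₂ s))) s := by
    intro s
    have h1 : HasDerivAt (fun u => z * Real.exp (γ u)) (z * (Real.exp (γ s) * b₁ s)) s :=
      ((hγ s).exp).const_mul z
    have h2 := h1.mul (hFd s)
    exact h2.const_sub 1
  intro t ht
  have hGpos : 0 < G t := hpos t ht
  have hGne : G t ≠ 0 := ne_of_gt hGpos
  have hA : Real.exp (γ t) ≠ 0 := Real.exp_ne_zero _
  -- exp (z * q t) = (G t)⁻¹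
  have hexp : Real.exp (z * q t) = (G t)⁻¹ := by
    rw [hq t]
    have hGt : G t = 1 - z * Real.exp (γ t) * F t := rfl
    rw [← hGt, mul_comm, div_mul_cancel₀ _ hz, Real.exp_neg, Real.exp_log hGpos]
  -- q part
  have hqd : HasDerivAt q (b₁ t * (Real.exp (z * q t) - 1) / z + b₂ t * Real.exp (z * q t)) t := by
    have h1 := (((hGd t).log hGne).neg).div_const z
    have h2 : HasDerivAt q
        (-((-(z * (Real.exp (γ t) * b₁ t) * F t + z * Real.exp (γ t) * (Real.exp (-γ t) * b₂ t)) /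
            G t)) / z) t := by
      refine h1.congr_of_eventuallyEq (Filter.Eventually.of_forall fun u => ?_)
      rw [hq u]; rfl
    convert h2 using 1
    rw [hexp, hGdef]
    rw [Real.exp_neg]
    field_simp [show (1 - z * Real.exp (γ t) * F t) ≠ 0 from hGne]
    ring
  refine ⟨hqd, ?_⟩
  -- p part
  set H : ℝ → ℝ := fun s => Real.exp (-γ s) - z * F s with hHdef
  have hHc : Continuous H := (hγc.neg.rexp).sub (continuous_const.mul hFc)
  have hHG : ∀ s, H s = Real.exp (-γ s) * G s := by
    intro s
    simp only [hHdef, hGdef]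
    rw [Real.exp_neg]
    field_simp
  have hHpos : ∀ s ∈ I, 0 < H s := by
    intro s hs
    rw [hHG s]
    exact mul_pos (Real.exp_pos _) (hpos s hs)
  have hHne : H t ≠ 0 := ne_of_gt (hHpos t ht)
  have hsub : Set.uIcc t₀ t ⊆ I := hconv.ordConnected.uIcc_subset ht₀ ht
  have hint : IntervalIntegrable (fun τ => (H τ)⁻¹) MeasureTheory.volume t₀ t := by
    apply ContinuousOn.intervalIntegrable
    exact (hHc.continuousOn.inv₀ fun x hx => ne_of_gt (hHpos x (hsub hx)))
  have hJd : HasDerivAt (fun u => c₂ + ∫ τ in t₀..u, (H τ)⁻¹) ((H t)⁻¹) t := by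
    refine HasDerivAt.const_add c₂ ?_
    exact intervalIntegral.integral_hasDerivAt_right hint
      (hHc.measurable.inv.stronglyMeasurable.stronglyMeasurableAtFilter)
      (hHc.continuousAt.inv₀ hHne)
  have hHd : HasDerivAt H (Real.exp (-γ t) * (-b₁ t) - z * (Real.exp (-γ t) * b₂ t)) t :=
    ((hγ t).neg.exp).sub ((hFd t).const_mul z)
  have hpd := hHd.mul hJd
  have hpd' : HasDerivAt p
      ((Real.exp (-γ t) * (-b₁ t) - z * (Real.exp (-γ t) * b₂ t)) *
        (c₂ + ∫ τ in t₀..t, (H τ)⁻¹) + H t * (H t)⁻¹) t := by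
    refine hpd.congr_of_eventuallyEq (Filter.Eventually.of_forall fun u => ?_)
    rw [hp u]; rfl
  convert hpd' using 1
  have hInt : (∫ τ in t₀..t, (H τ)⁻¹) = ∫ τ in t₀..t, (Real.exp (-γ τ) - z * F τ)⁻¹ := rfl
  have hHt : H t = Real.exp (-γ t) - z * F t := rfl
  have hGt : G t = 1 - z * Real.exp (γ t) * F t := rfl
  have hHne' : Real.exp (-γ t) - z * F t ≠ 0 := hHne
  have hGne' : 1 - z * Real.exp (γ t) * F t ≠ 0 := hGne
  rw [hp t, hexp, hInt, mul_inv_cancel₀ hHne, hGt]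
  generalize (∫ τ in t₀..t, (Real.exp (-γ τ) - z * F τ)⁻¹) = Jv
  rw [Real.exp_neg] at hHne' ⊢
  field_simp
  ring
end

section
/- The Lagrangian L(t,x,v) = t³x⁶/v² satisfies the Euler–Lagrange equation d/dt(∂L/∂v) − ∂L/∂x = 0 along any solution of the Buchdahl equation x'' = (3/x)(x')² + (1/t)x' with x(t) ≠ 0, x'(t) ≠ 0, t > 0; conversely, any twice-differentiable x with x, x' nonvanishing satisfying the Euler–Lagrange equation for L satisfies the Buchdahl equation. -/
theorem buchdahl_lagrangian (I : Set ℝ) (hI : IsOpen I) (hconv : Convex ℝ I)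
    (hIpos : ∀ t ∈ I, 0 < t)
    (L : ℝ → ℝ → ℝ → ℝ) (hL : ∀ t x v, L t x v = t ^ 3 * x ^ 6 / v ^ 2)
    (x dx ddx : ℝ → ℝ)
    (hx : ∀ t ∈ I, HasDerivAt x (dx t) t)
    (hdx : ∀ t ∈ I, HasDerivAt dx (ddx t) t)
    (hx0 : ∀ t ∈ I, x t ≠ 0) (hdx0 : ∀ t ∈ I, dx t ≠ 0) :
    (∀ t ∈ I,
        deriv (fun s => deriv (fun v => L s (x s) v) (dx s)) t
          - deriv (fun ξ => L t ξ (dx t)) (x t) = 0)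
      ↔ (∀ t ∈ I, ddx t = (3 / x t) * (dx t) ^ 2 + dx t / t) := by
  -- inner derivative: ∂L/∂v
  have inner : ∀ s ∈ I, deriv (fun v => L s (x s) v) (dx s)
      = -2 * (s ^ 3 * x s ^ 6) / dx s ^ 3 := by
    intro s hs
    have h1 : HasDerivAt (fun v : ℝ => s ^ 3 * x s ^ 6 / v ^ 2)
        ((0 * (dx s ^ 2) - (s ^ 3 * x s ^ 6) * ((2 : ℕ) * dx s ^ (2 - 1))) / (dx s ^ 2) ^ 2)
        (dx s) :=
      (hasDerivAt_const _ _).div (hasDerivAt_pow 2 (dx s))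
        (pow_ne_zero 2 (hdx0 s hs))
    have h2 : HasDerivAt (fun v : ℝ => L s (x s) v)
        ((0 * (dx s ^ 2) - (s ^ 3 * x s ^ 6) * ((2 : ℕ) * dx s ^ (2 - 1))) / (dx s ^ 2) ^ 2)
        (dx s) := by
      simpa only [hL] using h1
    rw [h2.deriv]
    have hd := hdx0 s hs
    field_simp
    ring
  have main : ∀ t ∈ I,
      deriv (fun s => deriv (fun v => L s (x s) v) (dx s)) t
        - deriv (fun ξ => L t ξ (dx t)) (x t)
      = (6 * t ^ 3 * x t ^ 6 / dx t ^ 4) * (ddx t - ((3 / x t) * dx t ^ 2 + dx t / t)) := by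
    intro t ht
    have hx0t := hx0 t ht
    have hd0t := hdx0 t ht
    have ht0 := (hIpos t ht).ne'
    -- derivative of the explicit p-momentum function
    have hnum : HasDerivAt (fun s => -2 * (s ^ 3 * x s ^ 6))
        (-2 * (3 * t ^ 2 * x t ^ 6 + t ^ 3 * (6 * x t ^ 5 * dx t))) t := by
      have hp : HasDerivAt (fun s : ℝ => s ^ 3) (3 * t ^ 2) t := by
        simpa using hasDerivAt_pow 3 t
      have hq : HasDerivAt (fun s => x s ^ 6) (6 * x t ^ 5 * dx t) t := by
        simpa using (hx t ht).fun_pow 6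
      simpa [mul_comm, mul_assoc, mul_left_comm] using ((hp.mul hq).const_mul (-2 : ℝ))
    have hden : HasDerivAt (fun s => dx s ^ 3) (3 * dx t ^ 2 * ddx t) t := by
      simpa using (hdx t ht).fun_pow 3
    have hg : HasDerivAt (fun s => -2 * (s ^ 3 * x s ^ 6) / dx s ^ 3)
        ((-2 * (3 * t ^ 2 * x t ^ 6 + t ^ 3 * (6 * x t ^ 5 * dx t)) * dx t ^ 3
          - -2 * (t ^ 3 * x t ^ 6) * (3 * dx t ^ 2 * ddx t)) / (dx t ^ 3) ^ 2) t :=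
      hnum.div hden (pow_ne_zero 3 hd0t)
    have heq : deriv (fun s => deriv (fun v => L s (x s) v) (dx s)) t
        = deriv (fun s => -2 * (s ^ 3 * x s ^ 6) / dx s ^ 3) t := by
      apply Filter.EventuallyEq.deriv_eq
      filter_upwards [hI.mem_nhds ht] with s hs
      exact inner s hs
    -- derivative of ∂L/∂x term
    have hx5 : HasDerivAt (fun ξ : ℝ => t ^ 3 * ξ ^ 6 / dx t ^ 2)
        (t ^ 3 * (6 * x t ^ 5) / dx t ^ 2) (x t) := by
      have := ((hasDerivAt_pow 6 (x t)).const_mul (t ^ 3)).div_const (dx t ^ 2)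
      simpa using this
    have hx5' : deriv (fun ξ => L t ξ (dx t)) (x t)
        = t ^ 3 * (6 * x t ^ 5) / dx t ^ 2 := by
      have : HasDerivAt (fun ξ => L t ξ (dx t))
          (t ^ 3 * (6 * x t ^ 5) / dx t ^ 2) (x t) := by
        simpa only [hL] using hx5
      exact this.deriv
    rw [heq, hg.deriv, hx5']
    field_simp
    ring
  constructor
  · intro h t ht
    have := h t ht
    rw [main t ht] at this
    rcases mul_eq_zero.mp this with hc | hc
    · exfalso
      have ht0 := (hIpos t ht).ne'
      have : (6 : ℝ) * t ^ 3 * x t ^ 6 / dx t ^ 4 ≠ 0 := by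
        apply div_ne_zero
        · exact mul_ne_zero (mul_ne_zero (by norm_num) (pow_ne_zero _ ht0))
            (pow_ne_zero _ (hx0 t ht))
        · exact pow_ne_zero _ (hdx0 t ht)
      exact this hc
    · linarith [sub_eq_zero.mp hc]
  · intro h t ht
    rw [main t ht, h t ht]
    ring
end
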